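/- Let θ ∈ (0, 1) and let (Δ_k)_{k≥0} be a sequence of positive real numbers with Δ_k → 0 such that Δ_{k+1}^{θ} ≤ Δ_k − Δ_{k+1} for all k ≥ 0. Then Δ_{k+1}/Δ_k → 0 as k → ∞, i.e. the sequence converges to zero superlinearly. -/
import Mathlib


/-- The KL recurrence `Δ_{k+1}^θ ≤ Δ_k - Δ_{k+1}` with `θ ∈ (0,1)` and `Δ_k → 0`,
`Δ_k > 0`, forces superlinear convergence of `Δ_k` to zero:
`Δ_{k+1}/Δ_k → 0`. -/
theorem kl_recurrence_superlinear
    (θ : ℝ) (hθ : θ ∈ Set.Ioo (0 : ℝ) 1)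
    (Δ : ℕ → ℝ) (hpos : ∀ k : ℕ, 0 < Δ k)
    (hlim : Filter.Tendsto Δ Filter.atTop (nhds 0))
    (hrec : ∀ k : ℕ, Δ (k + 1) ^ θ ≤ Δ k - Δ (k + 1)) :
    Filter.Tendsto (fun k : ℕ => Δ (k + 1) / Δ k) Filter.atTop (nhds 0) := by
  obtain ⟨hθ0, hθ1⟩ := hθ
  have h1 : Filter.Tendsto (fun k => Δ (k + 1)) Filter.atTop (nhds 0) :=
    hlim.comp (Filter.tendsto_add_atTop_nat 1)
  have h1' : Filter.Tendsto (fun k => Δ (k + 1)) Filter.atTop (nhdsWithin 0 (Set.Ioi 0)) := by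
    rw [tendsto_nhdsWithin_iff]
    exact ⟨h1, Filter.Eventually.of_forall fun k => hpos _⟩
  have hpow : Filter.Tendsto (fun x : ℝ => x ^ (θ - 1)) (nhdsWithin 0 (Set.Ioi 0))
      Filter.atTop := by
    have h2 := (tendsto_rpow_atTop (show (0:ℝ) < 1 - θ by linarith)).comp
      tendsto_inv_nhdsGT_zero
    refine h2.congr' ?_
    filter_upwards [self_mem_nhdsWithin] with x hx
    have hx0 : (0:ℝ) < x := hx
    rw [Function.comp_apply, Real.inv_rpow hx0.le, ← Real.rpow_neg hx0.le]
    ring_nf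
  have hden : Filter.Tendsto (fun k => 1 + Δ (k + 1) ^ (θ - 1)) Filter.atTop Filter.atTop :=
    Filter.tendsto_atTop_add_const_left _ 1 (hpow.comp h1')
  have hbound : Filter.Tendsto (fun k => (1 + Δ (k + 1) ^ (θ - 1))⁻¹) Filter.atTop (nhds 0) :=
    hden.inv_tendsto_atTop
  refine squeeze_zero (fun k => div_nonneg (hpos _).le (hpos _).le) (fun k => ?_) hbound
  have ha := hpos (k + 1)
  have ht : (0:ℝ) < Δ (k + 1) ^ (θ - 1) := Real.rpow_pos_of_pos ha _
  have key : Δ (k + 1) * (1 + Δ (k + 1) ^ (θ - 1)) = Δ (k + 1) + Δ (k + 1) ^ θ := by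
    rw [mul_add, mul_one]
    congr 1
    calc Δ (k + 1) * Δ (k + 1) ^ (θ - 1) = Δ (k + 1) ^ (1:ℝ) * Δ (k + 1) ^ (θ - 1) := by
          rw [Real.rpow_one]
      _ = Δ (k + 1) ^ (1 + (θ - 1)) := (Real.rpow_add ha _ _).symm
      _ = Δ (k + 1) ^ θ := by ring_nf
  have hle : Δ (k + 1) * (1 + Δ (k + 1) ^ (θ - 1)) ≤ Δ k := by
    have := hrec k; linarith [key]
  calc Δ (k + 1) / Δ k ≤ Δ (k + 1) / (Δ (k + 1) * (1 + Δ (k + 1) ^ (θ - 1))) :=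
        div_le_div_of_nonneg_left ha.le (by positivity) hle
    _ = (1 + Δ (k + 1) ^ (θ - 1))⁻¹ := by
        rw [div_mul_eq_div_div, div_self ha.ne', one_div]
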